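/- arXiv:1611.09984 — 2 statements merged into one kernel-verified Lean document; each statement's English description precedes it below -/
import Mathlib

section
/- A Metzler matrix A (all off-diagonal entries nonnegative) is Hurwitz (all eigenvalues have negative real part) if there exists a vector p with strictly positive entries such that A p < 0 componentwise. -/
open Matrix

/-- A real square matrix is Hurwitz if every complex eigenvalue has negative real part. -/
def IsHurwitz {n : ℕ} (A : Matrix (Fin n) (Fin n) ℝ) : Prop :=
  ∀ μ : ℂ, μ ∈ spectrum ℂ (A.map Complex.ofReal) → μ.re < 0

theorem metzler_hurwitz_of_pos_vector (n : ℕ) (A : Matrix (Fin n) (Fin n) ℝ)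
    (hMetzler : ∀ i j, i ≠ j → 0 ≤ A i j)
    (p : Fin n → ℝ) (hp : ∀ i, 0 < p i) (hAp : ∀ i, A.mulVec p i < 0) :
    IsHurwitz A := by
  intro μ hμ
  set M := A.map Complex.ofReal with hM
  rw [← AlgEquiv.spectrum_eq (Matrix.toLinAlgEquiv' (R := ℂ) (n := Fin n)),
    ← Module.End.hasEigenvalue_iff_mem_spectrum] at hμ
  obtain ⟨v, hvec⟩ := hμ.exists_hasEigenvector
  have hv0 : v ≠ 0 := hvec.2
  have hv : M.mulVec v = μ • v := by
    have := hvec.apply_eq_smul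
    rwa [Matrix.toLinAlgEquiv'_apply] at this
  -- pick index maximizing |v j| / p j
  obtain ⟨i₀, hi₀⟩ : ∃ i, v i ≠ 0 := by
    by_contra h
    push_neg at h
    exact hv0 (funext h)
  have hne : (Finset.univ : Finset (Fin n)).Nonempty := ⟨i₀, Finset.mem_univ _⟩
  obtain ⟨i, -, hi⟩ := Finset.exists_max_image Finset.univ
    (fun j => ‖v j‖ / p j) hne
  have hfi_pos : 0 < ‖v i‖ / p i :=
    lt_of_lt_of_le (div_pos (by simpa using hi₀) (hp i₀)) (hi i₀ (Finset.mem_univ _))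
  set c := ‖v i‖ / p i with hc
  have hvi : ‖v i‖ = c * p i := by
    rw [hc, div_mul_cancel₀ _ (hp i).ne']
  have hbound : ∀ j, ‖v j‖ ≤ c * p j := fun j => by
    have h := mul_le_mul_of_nonneg_right (hi j (Finset.mem_univ _)) (hp j).le
    rwa [div_mul_cancel₀ _ (hp j).ne'] at h
  -- the eigenvalue equation at i
  have heq : (μ - (A i i : ℂ)) * v i = ∑ j ∈ Finset.univ.erase i, (A i j : ℂ) * v j := by
    have h1 : ∑ j, (A i j : ℂ) * v j = μ * v i := by
      have := congrFun hv i
      simpa [Matrix.mulVec, dotProduct, hM, Matrix.map_apply] using this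
    have h2 : ∑ j ∈ Finset.univ.erase i, (A i j : ℂ) * v j
        = (∑ j, (A i j : ℂ) * v j) - (A i i : ℂ) * v i := by
      rw [Finset.sum_erase_eq_sub (Finset.mem_univ i)]
    rw [h2, h1]; ring
  have habs : ‖μ - (A i i : ℂ)‖ * (c * p i)
      ≤ (A.mulVec p i - A i i * p i) * c := by
    rw [← hvi, ← norm_mul, heq]
    calc ‖∑ j ∈ Finset.univ.erase i, (A i j : ℂ) * v j‖
        ≤ ∑ j ∈ Finset.univ.erase i, ‖(A i j : ℂ) * v j‖ := by
          exact norm_sum_le _ _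
      _ ≤ ∑ j ∈ Finset.univ.erase i, A i j * (c * p j) := by
          apply Finset.sum_le_sum
          intro j hj
          rw [norm_mul, Complex.norm_real, Real.norm_eq_abs,
            abs_of_nonneg (hMetzler i j (Finset.ne_of_mem_erase hj).symm)]
          exact mul_le_mul_of_nonneg_left (hbound j)
            (hMetzler i j (Finset.ne_of_mem_erase hj).symm)
      _ = (A.mulVec p i - A i i * p i) * c := by
          have hs : ∑ j ∈ Finset.univ.erase i, A i j * p j
              = A.mulVec p i - A i i * p i := by
            rw [Finset.sum_erase_eq_sub (Finset.mem_univ i)]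
            simp [Matrix.mulVec, dotProduct]
          rw [← hs, Finset.sum_mul]
          exact Finset.sum_congr rfl fun j _ => by ring
  have hkey : ‖μ - (A i i : ℂ)‖ < -A i i := by
    have h1 : ‖μ - (A i i : ℂ)‖ * p i ≤ A.mulVec p i - A i i * p i := by
      have hc0 : 0 < c := hfi_pos
      have := habs
      rw [show ‖μ - (A i i : ℂ)‖ * (c * p i)
        = ‖μ - (A i i : ℂ)‖ * p i * c by ring] at this
      exact le_of_mul_le_mul_right this hc0
    have h2 : A.mulVec p i - A i i * p i < -A i i * p i := by
      have := hAp i; linarith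
    have h3 : ‖μ - (A i i : ℂ)‖ * p i < -A i i * p i := lt_of_le_of_lt h1 h2
    exact lt_of_mul_lt_mul_right h3 (hp i).le |>.trans_le (le_refl _)
  have hre : μ.re - A i i ≤ ‖μ - (A i i : ℂ)‖ := by
    have := Complex.abs_re_le_norm (μ - (A i i : ℂ))
    simp only [Complex.sub_re, Complex.ofReal_re] at this
    exact (le_abs_self _).trans this
  linarith
end

section
/- With A as in the path-graph example (diagonal r, subdiagonal 1, corner entry c ≥ 0 at position (1,n)) and u > r, the matrix A - uI is Hurwitz if and only if c < (u - r)ⁿ. -/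
open Matrix

/-- Spectrum of the cyclic-companion-like matrix. -/
lemma spec_aux (n : ℕ) (hn : 2 ≤ n) (ρ γ : ℂ)
    (M : Matrix (Fin n) (Fin n) ℂ)
    (hM : ∀ i j : Fin n, M i j =
      if (i : ℕ) = (j : ℕ) then ρ
      else if (i : ℕ) = (j : ℕ) + 1 then 1
      else if (i : ℕ) = 0 ∧ (j : ℕ) = n - 1 then γ else 0)
    (μ : ℂ) : μ ∈ spectrum ℂ M ↔ (μ - ρ) ^ n = γ := by
  have hn0 : 0 < n := by omega
  have hlast : n - 1 < n := by omega
  -- mulVec formula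
  have hmv : ∀ v : Fin n → ℂ, ∀ i : Fin n, M.mulVec v i =
      ρ * v i + (if (i : ℕ) = 0 then γ * v ⟨n - 1, hlast⟩
        else v ⟨(i : ℕ) - 1, by omega⟩) := by
    intro v i
    rw [Matrix.mulVec, dotProduct]
    by_cases hi : (i : ℕ) = 0
    · rw [if_pos hi]
      have key : ∀ j : Fin n, M i j * v j =
          (if j = i then ρ * v i else 0) +
          (if j = (⟨n - 1, hlast⟩ : Fin n) then γ * v ⟨n - 1, hlast⟩ else 0) := by
        intro j
        rw [hM]
        by_cases h1 : j = i
        · subst h1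
          rw [if_pos rfl, if_pos rfl, if_neg, add_zero]
          intro h
          have : (j : ℕ) = n - 1 := congrArg Fin.val h
          omega
        · have hv1 : (i : ℕ) ≠ (j : ℕ) := fun h => h1 (Fin.ext h.symm)
          rw [if_neg hv1, if_neg (fun (h : (i:ℕ) = (j:ℕ) + 1) => by omega), if_neg h1]
          by_cases h2 : j = (⟨n - 1, hlast⟩ : Fin n)
          · subst h2
            rw [if_pos ⟨hi, rfl⟩, if_pos rfl, zero_add]
          · have hv2 : (j : ℕ) ≠ n - 1 := fun h => h2 (Fin.ext h)
            rw [if_neg (fun h => hv2 h.2), if_neg h2, zero_mul, add_zero]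
      rw [Finset.sum_congr rfl (fun j _ => key j), Finset.sum_add_distrib,
        Finset.sum_ite_eq', Finset.sum_ite_eq', if_pos (Finset.mem_univ _),
        if_pos (Finset.mem_univ _)]
    · rw [if_neg hi]
      have key : ∀ j : Fin n, M i j * v j =
          (if j = i then ρ * v i else 0) +
          (if j = (⟨(i:ℕ) - 1, by omega⟩ : Fin n) then v ⟨(i:ℕ) - 1, by omega⟩ else 0) := by
        intro j
        rw [hM]
        by_cases h1 : j = i
        · subst h1
          rw [if_pos rfl, if_pos rfl, if_neg, add_zero]
          intro h
          have : (j : ℕ) = (j : ℕ) - 1 := congrArg Fin.val h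
          omega
        · have hv1 : (i : ℕ) ≠ (j : ℕ) := fun h => h1 (Fin.ext h.symm)
          rw [if_neg hv1]
          rw [if_neg h1]
          by_cases h2 : j = (⟨(i:ℕ) - 1, by omega⟩ : Fin n)
          · have hv2 : (j : ℕ) = (i : ℕ) - 1 := congrArg Fin.val h2
            rw [if_pos (by omega), if_pos h2, one_mul, zero_add]
            subst h2
            rfl
          · have hv2 : (j : ℕ) ≠ (i : ℕ) - 1 := fun h => h2 (Fin.ext h)
            rw [if_neg (fun (h : (i:ℕ) = (j:ℕ) + 1) => by omega),
              if_neg (fun h => hi h.1), if_neg h2, zero_mul, add_zero]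
      rw [Finset.sum_congr rfl (fun j _ => key j), Finset.sum_add_distrib,
        Finset.sum_ite_eq', Finset.sum_ite_eq', if_pos (Finset.mem_univ _),
        if_pos (Finset.mem_univ _)]
  -- spectrum ↔ eigenvector
  have hspec : μ ∈ spectrum ℂ M ↔ ∃ v : Fin n → ℂ, v ≠ 0 ∧ M.mulVec v = μ • v := by
    rw [spectrum.mem_iff, Algebra.algebraMap_eq_smul_one, Matrix.isUnit_iff_isUnit_det,
      isUnit_iff_ne_zero, not_not, ← Matrix.exists_mulVec_eq_zero_iff]
    constructor
    · rintro ⟨v, hv, hmv0⟩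
      refine ⟨v, hv, ?_⟩
      funext i
      have h := congrFun hmv0 i
      simp only [Matrix.sub_mulVec, Matrix.smul_mulVec, Matrix.one_mulVec,
        Pi.sub_apply, Pi.smul_apply, Pi.zero_apply, sub_eq_zero] at h
      exact h.symm
    · rintro ⟨v, hv, hEq⟩
      refine ⟨v, hv, ?_⟩
      funext i
      have h := congrFun hEq i
      simp only [Matrix.sub_mulVec, Matrix.smul_mulVec, Matrix.one_mulVec,
        Pi.sub_apply, Pi.smul_apply, Pi.zero_apply, sub_eq_zero]
      exact h.symm
  rw [hspec]
  set z : ℂ := μ - ρ with hz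
  constructor
  · rintro ⟨v, hv, hEq⟩
    have heq : ∀ i : Fin n, (i : ℕ) ≠ 0 → v ⟨(i:ℕ) - 1, by omega⟩ = z * v i := by
      intro i hi
      have h := congrFun hEq i
      rw [hmv, if_neg hi] at h
      simp only [Pi.smul_apply, smul_eq_mul] at h
      rw [hz]
      linear_combination h
    have heq0 : γ * v ⟨n - 1, hlast⟩ = z * v ⟨0, hn0⟩ := by
      have h := congrFun hEq ⟨0, hn0⟩
      rw [hmv, if_pos rfl] at h
      simp only [Pi.smul_apply, smul_eq_mul] at h
      rw [hz]
      linear_combination h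
    have hval : ∀ k : ℕ, k ≤ n - 1 → v ⟨n - 1 - k, by omega⟩ = z ^ k * v ⟨n - 1, hlast⟩ := by
      intro k
      induction k with
      | zero => intro _; simp
      | succ k ih =>
        intro hk
        have hk' : k ≤ n - 1 := by omega
        have hne : (n - 1 - k : ℕ) ≠ 0 := by omega
        have h := heq ⟨n - 1 - k, by omega⟩ hne
        simp only at h
        have he : (n - 1 - k : ℕ) - 1 = n - 1 - (k + 1) := by omega
        rw [show (⟨(n - 1 - k : ℕ) - 1, by omega⟩ : Fin n)
            = ⟨n - 1 - (k + 1), by omega⟩ from Fin.ext he] at h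
        rw [h, ih hk']
        ring
    by_cases hlz : v ⟨n - 1, hlast⟩ = 0
    · exfalso
      apply hv
      funext i
      have hik : (i : ℕ) = n - 1 - (n - 1 - (i:ℕ)) := by omega
      have h := hval (n - 1 - (i:ℕ)) (by omega)
      rw [hlz, mul_zero] at h
      have hii : i = (⟨n - 1 - (n - 1 - (i:ℕ)), by omega⟩ : Fin n) := Fin.ext hik
      rw [hii]; exact h
    · have h0 : v ⟨0, hn0⟩ = z ^ (n - 1) * v ⟨n - 1, hlast⟩ := by
        have h := hval (n - 1) le_rfl
        simpa using h
      rw [h0] at heq0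
      have hγ : γ * v ⟨n - 1, hlast⟩ = z ^ n * v ⟨n - 1, hlast⟩ := by
        rw [heq0, ← mul_assoc, ← pow_succ']
        congr 2
        omega
      exact (mul_right_cancel₀ hlz hγ).symm
  · intro hzn
    refine ⟨fun i => z ^ (n - 1 - (i:ℕ)), ?_, ?_⟩
    · intro h
      have h1 := congrFun h ⟨n - 1, hlast⟩
      simp at h1
    · funext i
      rw [hmv]
      simp only [Pi.smul_apply, smul_eq_mul]
      by_cases hi : (i : ℕ) = 0
      · rw [if_pos hi]
        have h1 : n - 1 - (n - 1 : ℕ) = 0 := by omega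
        have h2 : n - 1 - (i : ℕ) = n - 1 := by omega
        have h3 : γ = z * z ^ (n - 1) := by
          rw [← pow_succ', ← hzn]
          congr 1
          omega
        simp only [h1, h2, pow_zero, mul_one, h3, hz]
        ring
      · rw [if_neg hi]
        have h3 : n - 1 - ((i:ℕ) - 1) = (n - 1 - (i:ℕ)) + 1 := by omega
        simp only [h3, pow_succ']
        rw [hz]
        ring

theorem path_graph_hurwitz_iff (n : ℕ) (hn : 2 ≤ n) (r u c : ℝ) (hu : r < u) (hc : 0 ≤ c)
    (A : Matrix (Fin n) (Fin n) ℝ)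
    (hA : A = Matrix.of fun i j : Fin n =>
      if (i : ℕ) = (j : ℕ) then r
      else if (i : ℕ) = (j : ℕ) + 1 then 1
      else if (i : ℕ) = 0 ∧ (j : ℕ) = n - 1 then c else 0) :
    IsHurwitz (A - u • (1 : Matrix (Fin n) (Fin n) ℝ)) ↔ c < (u - r) ^ n := by
  have hn0 : n ≠ 0 := by omega
  set M : Matrix (Fin n) (Fin n) ℂ := (A - u • (1 : Matrix (Fin n) (Fin n) ℝ)).map Complex.ofReal with hMdef
  have hM : ∀ i j : Fin n, M i j =
      if (i : ℕ) = (j : ℕ) then ((r : ℂ) - u)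
      else if (i : ℕ) = (j : ℕ) + 1 then 1
      else if (i : ℕ) = 0 ∧ (j : ℕ) = n - 1 then (c : ℂ) else 0 := by
    intro i j
    simp only [hMdef, Matrix.map_apply, Matrix.sub_apply, Matrix.smul_apply, Matrix.one_apply,
      hA, Matrix.of_apply, smul_eq_mul]
    by_cases h1 : (i : ℕ) = (j : ℕ)
    · have h : i = j := Fin.ext h1
      simp [h1, h, Complex.ofReal_sub]
    · have h : i ≠ j := fun h => h1 (by rw [h])
      by_cases h2 : (i : ℕ) = (j : ℕ) + 1
      · simp [h1, h2, h]
      · by_cases h3 : (i : ℕ) = 0 ∧ (j : ℕ) = n - 1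
        · have h4 : ¬ ((0:ℕ) = n - 1) := by omega
          simp [h1, h2, h3, h, h4]
        · simp [h1, h2, h3, h]
  have hspec := spec_aux n hn ((r : ℂ) - u) (c : ℂ) M hM
  unfold IsHurwitz
  rw [← hMdef]
  constructor
  · intro hH
    set z : ℝ := c ^ ((n : ℝ)⁻¹) with hzdef
    have hzpow : z ^ n = c := by
      rw [hzdef, ← Real.rpow_natCast (c ^ ((n:ℝ)⁻¹)) n, ← Real.rpow_mul hc]
      rw [inv_mul_cancel₀ (by exact_mod_cast hn0 : (n:ℝ) ≠ 0), Real.rpow_one]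
    have hznn : 0 ≤ z := Real.rpow_nonneg hc _
    have hmem : ((r : ℂ) - u + z) ∈ spectrum ℂ M := by
      rw [hspec]
      have h : ((r:ℂ) - u + z) - ((r:ℂ) - u) = (z : ℂ) := by ring
      rw [h, ← Complex.ofReal_pow, hzpow]
    have hlt := hH _ hmem
    have hre : ((r:ℂ) - u + z).re = r - u + z := by simp
    rw [hre] at hlt
    have hzlt : z < u - r := by linarith
    calc c = z ^ n := hzpow.symm
      _ < (u - r) ^ n := pow_lt_pow_left₀ hzlt hznn hn0
  · intro hclt μ hμ
    rw [hspec] at hμ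
    set w : ℂ := μ - ((r:ℂ) - u) with hw
    have habs : ‖w‖ ^ n = c := by
      have h : ‖w ^ n‖ = ‖((c : ℂ))‖ := by rw [hμ]
      rwa [norm_pow, Complex.norm_real, Real.norm_of_nonneg hc] at h
    have hur : (0 : ℝ) ≤ u - r := by linarith
    have hwlt : ‖w‖ < u - r := by
      apply lt_of_pow_lt_pow_left₀ n hur
      rw [habs]; exact hclt
    have hre : w.re ≤ ‖w‖ := Complex.re_le_norm w
    have hmre : μ.re = (r - u) + w.re := by
      rw [hw]; simp
    rw [hmre]
    linarith
end
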